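/- Let V, ⟨·,·⟩, C(V), and α, α^∨ ∈ V be as follows: ⟨α,α⟩ = ⟨α^∨,α^∨⟩ = 0, k := ⟨α^∨,α⟩ = ⟨α,α^∨⟩ ≠ 0, and let τ = (α·α^∨)/k + 1 ∈ C(V). Let s : V → V be the linear involution with s(α) = −α, s(α^∨) = −α^∨, and s(v) = v whenever ⟨v, α⟩ = ⟨v, α^∨⟩ = 0. Then τ · v · τ = s(v) in C(V) for every v ∈ V. -/

import Mathlib

/-- With `τ = (α·α^∨)/k + 1` in the Clifford algebra (convention `v² = -⟨v,v⟩`,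
`k = ⟨α^∨,α⟩ ≠ 0`, `α, α^∨` isotropic), and `s : V → V` the linear involution with
`s(α) = -α`, `s(α^∨) = -α^∨` and `s(v) = v` on the orthogonal complement of `α, α^∨`,
one has `τ · v · τ = s(v)` for every `v ∈ V`. -/
theorem tau_conj_eq_reflection
    {V : Type*} [AddCommGroup V] [Module ℂ V] [FiniteDimensional ℂ V]
    (B : V →ₗ[ℂ] V →ₗ[ℂ] ℂ) (hsymm : ∀ v w, B v w = B w v)
    (hnd : ∀ v, (∀ w, B v w = 0) → v = 0)
    (Q : QuadraticForm ℂ V) (hQ : ∀ v, Q v = -(B v v))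
    (α αv : V) (hα : B α α = 0) (hαv : B αv αv = 0) (hk : B αv α ≠ 0)
    (τ : CliffordAlgebra Q)
    (hτ : τ = (B αv α)⁻¹ • (CliffordAlgebra.ι Q α * CliffordAlgebra.ι Q αv) + 1)
    (s : V →ₗ[ℂ] V) (hsα : s α = -α) (hsαv : s αv = -αv)
    (hsfix : ∀ v, B v α = 0 → B v αv = 0 → s v = v) :
    ∀ v : V, τ * CliffordAlgebra.ι Q v * τ = CliffordAlgebra.ι Q (s v) := by
  intro v
  set k := B αv α with hkdef
  set ι := CliffordAlgebra.ι Q with hι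
  -- polar formula
  have hpol : ∀ x y : V, QuadraticMap.polar Q x y = -(B x y + B y x) := by
    intro x y
    simp only [QuadraticMap.polar, hQ, map_add, LinearMap.add_apply]
    ring
  have hswap : ∀ x y : V, ι x * ι y
      = algebraMap ℂ _ (-(B x y + B y x)) - ι y * ι x := by
    intro x y
    have h := CliffordAlgebra.ι_mul_ι_add_swap (Q := Q) x y
    rw [hpol] at h
    exact eq_sub_of_add_eq h
  have hsq : ∀ x : V, B x x = 0 → ι x * ι x = 0 := by
    intro x hx
    rw [hι, CliffordAlgebra.ι_sq_scalar, hQ, hx]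
    simp
  -- decomposition of v
  set c : ℂ := B v αv * k⁻¹ with hc
  set d : ℂ := B v α * k⁻¹ with hd
  set w : V := v - c • α - d • αv with hw
  have hBααv : B α αv = k := by rw [hsymm]
  have hwα : B w α = 0 := by
    simp only [hw, map_sub, map_smul, LinearMap.sub_apply, LinearMap.smul_apply,
      smul_eq_mul, hα, hd]
    field_simp
    rw [← hkdef]; ring
  have hwαv : B w αv = 0 := by
    simp only [hw, map_sub, map_smul, LinearMap.sub_apply, LinearMap.smul_apply,
      smul_eq_mul, hαv, hBααv, hc]
    field_simp
    simp
  have hv : v = w + c • α + d • αv := by rw [hw]; abel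
  have hsv : s v = w - c • α - d • αv := by
    conv_lhs => rw [hv]
    simp only [map_add, map_smul, hsα, hsαv, hsfix w hwα hwαv]
    module
  -- notation
  set A : CliffordAlgebra Q := ι α with hA
  set E : CliffordAlgebra Q := ι αv with hE
  set W : CliffordAlgebra Q := ι w with hW
  have hA2 : A * A = 0 := hsq α hα
  have hE2 : E * E = 0 := hsq αv hαv
  have hAE : A * E = algebraMap ℂ _ (-(2*k)) - E * A := by
    have h := hswap α αv
    rw [hBααv, ← hkdef] at h
    rw [h]; ring_nf
    rfl
  have hWA : W * A = -(A * W) := by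
    have h := hswap w α
    rw [hwα, hsymm α w, hwα] at h
    simpa using h
  have hWE : W * E = -(E * W) := by
    have h := hswap w αv
    rw [hwαv, hsymm αv w, hwαv] at h
    simpa using h
  have hAEA : A * E * A = (-(2*k)) • A := by
    rw [hAE, sub_mul, mul_assoc, hA2, mul_zero, sub_zero, Algebra.smul_def]
  have hEAE : E * (A * E) = (-(2*k)) • E := by
    rw [hAE, mul_sub, ← mul_assoc, hE2, zero_mul, sub_zero, ← Algebra.commutes,
      Algebra.smul_def]
  have hAEAE : (A * E) * (A * E) = (-(2*k)) • (A * E) := by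
    rw [← mul_assoc, hAEA, smul_mul_assoc]
  have hcoef : k⁻¹ * (-(2*k)) = -2 := by field_simp
  have hτA : τ * A = -A := by
    calc τ * A = k⁻¹ • (A * E * A) + A := by
          rw [hτ, add_mul, one_mul, smul_mul_assoc]
      _ = (-2 : ℂ) • A + A := by rw [hAEA, smul_smul, hcoef]
      _ = -A := by module
  have hAτ : A * τ = A := by
    rw [hτ, mul_add, mul_one, mul_smul_comm, ← mul_assoc, hA2, zero_mul, smul_zero,
      zero_add]
  have hEτ : E * τ = -E := by
    calc E * τ = k⁻¹ • (E * (A * E)) + E := by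
          rw [hτ, mul_add, mul_one, mul_smul_comm]
      _ = (-2 : ℂ) • E + E := by rw [hEAE, smul_smul, hcoef]
      _ = -E := by module
  have hτE : τ * E = E := by
    rw [hτ, add_mul, one_mul, smul_mul_assoc, mul_assoc, hE2, mul_zero, smul_zero,
      zero_add]
  have hEW : E * W = -(W * E) := by rw [hWE, neg_neg]
  have hAW : A * W = -(W * A) := by rw [hWA, neg_neg]
  have hAEW : A * E * W = W * (A * E) := by
    calc A * E * W = A * (E * W) := by rw [mul_assoc]
      _ = -((A * W) * E) := by rw [hEW, mul_neg, mul_assoc]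
      _ = W * A * E := by rw [hAW, neg_mul, neg_neg]
      _ = W * (A * E) := by rw [mul_assoc]
  have hτW : τ * W = W * τ := by
    rw [hτ, add_mul, mul_add, one_mul, mul_one, smul_mul_assoc, mul_smul_comm, hAEW]
  have hτ2 : τ * τ = 1 := by
    have hx : (k⁻¹ • (A * E)) * (k⁻¹ • (A * E)) = (k⁻¹ * (k⁻¹ * (-(2*k)))) • (A * E) := by
      rw [smul_mul_assoc, mul_smul_comm, hAEAE, smul_smul, smul_smul, mul_assoc]
    have hc2 : k⁻¹ * (k⁻¹ * (-(2*k))) = -(2 * k⁻¹) := by rw [hcoef]; ring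
    rw [hτ, add_mul, mul_add, mul_add, one_mul, mul_one, hx, hc2]
    rw [mul_one]
    module
  have hτAτ : τ * A * τ = -A := by rw [hτA, neg_mul, hAτ]
  have hτEτ : τ * E * τ = -E := by rw [hτE, hEτ]
  have hτWτ : τ * W * τ = W := by rw [hτW, mul_assoc, hτ2, mul_one]
  have hιv : ι v = W + c • A + d • E := by
    conv_lhs => rw [hv]
    simp only [map_add, map_smul, hA, hE, hW]
  have hιsv : ι (s v) = W - c • A - d • E := by
    rw [hsv]
    simp only [map_sub, map_smul, hA, hE, hW]
  rw [hιv, hιsv]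
  calc τ * (W + c • A + d • E) * τ = τ * W * τ + c • (τ * A * τ) + d • (τ * E * τ) := by
        rw [mul_add, mul_add, add_mul, add_mul, mul_smul_comm, mul_smul_comm,
          smul_mul_assoc, smul_mul_assoc]
    _ = W - c • A - d • E := by rw [hτAτ, hτEτ, hτWτ]; module
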